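/- Lemma 3.5 (trichotomy for components of the R-boundary). Let R ≥ 1 and fix L > 2R+1. Let σ be a spin configuration on T_L, let Λ be either the vertex set of a component of the graph G_R(σ) with diameter less than L/2 or the union of the vertex sets of all components with diameter at least L/2, and let Λ' be of the same form with Λ' ≠ Λ. Then exactly one of the following holds: (1) Λ ∪ Int Λ ⊂ Int Λ' and Λ' ∪ Ext Λ' ⊂ Ext Λ; or (2) Λ' ∪ Int Λ' ⊂ Int Λ and Λ ∪ Ext Λ ⊂ Ext Λ'; or (3) Λ ∪ Int Λ ⊂ Ext Λ' and Λ' ∪ Int Λ' ⊂ Ext Λ. -/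

import Mathlib

open scoped BigOperators Classical
noncomputable section

/-! ### Generic graph-theoretic notions on a lattice -/

/-- A path inside the set `A` using the adjacency relation `adj`. -/
def pathIn {X : Type*} (adj : X → X → Prop) (A : Set X) (x y : X) : Prop :=
  Relation.ReflTransGen (fun u v => adj u v ∧ u ∈ A ∧ v ∈ A) x y

/-- `A` is a connected set of sites. -/
def connectedIn {X : Type*} (adj : X → X → Prop) (A : Set X) : Prop :=
  ∀ x ∈ A, ∀ y ∈ A, pathIn adj A x y

/-- The connected component of `x` inside `A`. -/
def compOf {X : Type*} (adj : X → X → Prop) (A : Set X) (x : X) : Set X :=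
  {y | pathIn adj A x y}

/-- `C` is a connected component of `A`. -/
def IsCompOf {X : Type*} (adj : X → X → Prop) (C A : Set X) : Prop :=
  ∃ x ∈ A, C = compOf adj A x

/-- External boundary `∂A`: sites outside `A` adjacent to `A`. -/
def extBd {X : Type*} (adj : X → X → Prop) (A : Set X) : Set X :=
  {x | x ∉ A ∧ ∃ y ∈ A, adj x y}

/-- `∂(Aᶜ)`: the sites of `A` adjacent to the complement of `A`. -/
def ringBd {X : Type*} (adj : X → X → Prop) (A : Set X) : Set X :=
  {x | x ∈ A ∧ ∃ y, y ∉ A ∧ adj x y}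

/-- `A° = A ∖ ∂(Aᶜ)`. -/
def interior' {X : Type*} (adj : X → X → Prop) (A : Set X) : Set X :=
  A \ ringBd adj A

/-- A configuration is constant on a set. -/
def constOn {X S : Type*} (σ : X → S) (A : Set X) : Prop :=
  ∀ x ∈ A, ∀ y ∈ A, σ x = σ y

/-! ### The lattice ℤ^d -/

/-- Sites of the lattice `ℤ^d`. -/
abbrev Site (d : ℕ) := Fin d → ℤ

/-- Nearest-neighbour adjacency on `ℤ^d`. -/
def adjZ {d : ℕ} (x y : Site d) : Prop := (∑ i, (x i - y i).natAbs) = 1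

/-- The cubic box with corner `a` and side (diameter) `s`. -/
def boxZ {d : ℕ} (a : Site d) (s : ℕ) : Set (Site d) :=
  {x | ∀ i, a i ≤ x i ∧ x i < a i + s}

/-- The diameter of `A ⊆ ℤ^d`: the side of the smallest cubic box containing `A`. -/
def diamZ {d : ℕ} (A : Set (Site d)) : ℕ := sInf {s | ∃ a, A ⊆ boxZ a s}

/-- The `R`-boundary `B_R(σ)` of a configuration `σ`. -/
def BRZ (R : ℕ) {d : ℕ} {S : Type*} (σ : Site d → S) : Set (Site d) :=
  {x | ∃ a, x ∈ boxZ a (2 * R + 1) ∧ ¬ constOn σ (boxZ a (2 * R + 1))}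

/-- Adjacency in the graph `G_R(σ)`. -/
def gadjZ (R : ℕ) {d : ℕ} {S : Type*} (σ : Site d → S) (x y : Site d) : Prop :=
  x ≠ y ∧ ∃ a, x ∈ boxZ a (2 * R + 1) ∧ y ∈ boxZ a (2 * R + 1) ∧
    ¬ constOn σ (boxZ a (2 * R + 1))

/-- A contour on `ℤ^d`. -/
structure ZContour (d : ℕ) (S : Type*) (R : ℕ) where
  supp : Set (Site d)
  conf : Site d → S
  finite : supp.Finite
  nonempty : supp.Nonempty
  conn : connectedIn adjZ supp
  gconn : ∀ x ∈ BRZ R conf, ∀ y ∈ BRZ R conf, Relation.ReflTransGen (gadjZ R conf) x y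
  br : BRZ R conf = supp

namespace ZContour

variable {d R : ℕ} {S : Type*}

/-- `|Y|`, the number of sites in the support of `Y`. -/
def size (Y : ZContour d S R) : ℕ := Y.supp.ncard

/-- The exterior of a contour: the union of infinite components of the complement. -/
def Ext (Y : ZContour d S R) : Set (Site d) :=
  {x | x ∉ Y.supp ∧ (compOf adjZ Y.suppᶜ x).Infinite}

/-- The interior of a contour: the union of finite components of the complement. -/
def Int (Y : ZContour d S R) : Set (Site d) :=
  {x | x ∉ Y.supp ∧ (compOf adjZ Y.suppᶜ x).Finite}

/-- The part of the interior with label `m`. -/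
def IntM (m : S) (Y : ZContour d S R) : Set (Site d) := {x ∈ Y.Int | Y.conf x = m}

/-- `V(Y) = supp Y ∪ Int Y`. -/
def V (Y : ZContour d S R) : Set (Site d) := Y.supp ∪ Y.Int

/-- `Y` is a `q`-contour. -/
def IsQ (q : S) (Y : ZContour d S R) : Prop := ∀ x ∈ Y.Ext, Y.conf x = q

end ZContour

/-! ### The torus T_L -/

/-- Sites of the torus `T_L = ℤ^d/(Lℤ)^d`. -/
abbrev Tor (d L : ℕ) := Fin d → ZMod L

/-- Nearest-neighbour adjacency on the torus. -/
def tadj {d L : ℕ} (x y : Tor d L) : Prop :=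
  ∃ i, (y i = x i + 1 ∨ x i = y i + 1) ∧ ∀ j, j ≠ i → x j = y j

/-- A cubic box on the torus with corner `a` and side (diameter) `s`. -/
def tbox {d L : ℕ} (a : Tor d L) (s : ℕ) : Set (Tor d L) :=
  {x | ∀ i, ∃ k : ℕ, k < s ∧ x i = a i + (k : ZMod L)}

/-- The diameter of `A ⊆ T_L`. -/
def tdiam {d L : ℕ} (A : Set (Tor d L)) : ℕ := sInf {s | ∃ a, A ⊆ tbox a s}

/-- The `R`-boundary `B_R(σ)` of a configuration on the torus. -/
def BRT (R : ℕ) {d L : ℕ} {S : Type*} (σ : Tor d L → S) : Set (Tor d L) :=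
  {x | ∃ a, x ∈ tbox a (2 * R + 1) ∧ ¬ constOn σ (tbox a (2 * R + 1))}

/-- Adjacency in the graph `G_R(σ)` on the torus. -/
def gadjT (R : ℕ) {d L : ℕ} {S : Type*} (σ : Tor d L → S) (x y : Tor d L) : Prop :=
  x ≠ y ∧ ∃ a, x ∈ tbox a (2 * R + 1) ∧ y ∈ tbox a (2 * R + 1) ∧
    ¬ constOn σ (tbox a (2 * R + 1))

/-- A contour on the torus `T_L`. -/
structure TContour (d L : ℕ) (S : Type*) (R : ℕ) where
  supp : Set (Tor d L)
  conf : Tor d L → S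
  nonempty : supp.Nonempty
  conn : connectedIn tadj supp
  small : 2 * tdiam supp < L
  gconn : ∀ x ∈ BRT R conf, ∀ y ∈ BRT R conf, Relation.ReflTransGen (gadjT R conf) x y
  br : BRT R conf = supp

/-- A contour network on the torus `T_L`. -/
structure TNetwork (d L : ℕ) (S : Type*) (R : ℕ) where
  supp : Set (Tor d L)
  conf : Tor d L → S
  br : BRT R conf = supp
  big : ∀ x ∈ supp, L ≤ 2 * tdiam (compOf (gadjT R conf) (BRT R conf) x)

/-- The exterior of a subset of the torus:  the unique component of the complement
containing more than `L^d/2` sites (for a nonempty connected set of diameter `< L/2`);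
`∅` otherwise. -/
def tExt {d L : ℕ} (Λ : Set (Tor d L)) : Set (Tor d L) :=
  if connectedIn tadj Λ ∧ Λ.Nonempty ∧ 2 * tdiam Λ < L then
    {x | x ∉ Λ ∧ L ^ d < 2 * (compOf tadj Λᶜ x).ncard}
  else ∅

/-- The interior of a subset of the torus. -/
def tInt {d L : ℕ} (Λ : Set (Tor d L)) : Set (Tor d L) := (Λ ∪ tExt Λ)ᶜ

namespace TContour
variable {d L R : ℕ} {S : Type*}
def size (Y : TContour d L S R) : ℕ := Y.supp.ncard
def Ext (Y : TContour d L S R) : Set (Tor d L) := tExt Y.supp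
def Int (Y : TContour d L S R) : Set (Tor d L) := tInt Y.supp
def IntM (m : S) (Y : TContour d L S R) : Set (Tor d L) :=
  {x ∈ Y.Int | Y.conf x = m}
def IsQ (q : S) (Y : TContour d L S R) : Prop := ∀ x ∈ Y.Ext, Y.conf x = q
end TContour


variable {d L R : ℕ} {S : Type*}

/-- The vertex set of the component of the graph `G_R(σ)` containing `x`. -/
def gcompT (R : ℕ) (σ : Tor d L → S) (x : Tor d L) : Set (Tor d L) :=
  compOf (gadjT R σ) (BRT R σ) x

/-- `Λ` is the vertex set of a component of `G_R(σ)` of diameter less than `L/2`. -/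
def IsSmallCompSet (R : ℕ) (σ : Tor d L → S) (Λ : Set (Tor d L)) : Prop :=
  (∃ x ∈ BRT R σ, Λ = gcompT R σ x) ∧ 2 * tdiam Λ < L

/-- The union of the vertex sets of all components of `G_R(σ)` of diameter at
least `L/2`. -/
def bigUnion (R : ℕ) (σ : Tor d L → S) : Set (Tor d L) :=
  {x | x ∈ BRT R σ ∧ L ≤ 2 * tdiam (gcompT R σ x)}

section Generic
variable {X : Type*} {adj : X → X → Prop} {A B K : Set X} {x y z : X}

lemma pathIn_mono (h : A ⊆ B) (hp : pathIn adj A x y) : pathIn adj B x y :=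
  Relation.ReflTransGen.mono (by rintro u v ⟨h1, h2, h3⟩; exact ⟨h1, h h2, h h3⟩) _ _ hp

lemma pathIn.trans (h1 : pathIn adj A x y) (h2 : pathIn adj A y z) : pathIn adj A x z :=
  Relation.ReflTransGen.trans h1 h2

lemma pathIn_symm (hs : ∀ a b, adj a b → adj b a) (h : pathIn adj A x y) :
    pathIn adj A y x := by
  induction h with
  | refl => exact Relation.ReflTransGen.refl
  | tail h1 h2 ih => exact Relation.ReflTransGen.head ⟨hs _ _ h2.1, h2.2.2, h2.2.1⟩ ih

lemma mem_compOf_self : x ∈ compOf adj A x := Relation.ReflTransGen.refl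

lemma pathIn.mem_right (hx : x ∈ A) (h : pathIn adj A x y) : y ∈ A := by
  induction h with
  | refl => exact hx
  | tail _ h2 _ => exact h2.2.2

lemma compOf_subset (hx : x ∈ A) : compOf adj A x ⊆ A := fun _ h => h.mem_right hx

lemma compOf_eq_of_mem (hs : ∀ a b, adj a b → adj b a) (hy : y ∈ compOf adj A x) :
    compOf adj A x = compOf adj A y := by
  ext z
  constructor
  · intro hz
    exact Relation.ReflTransGen.trans (pathIn_symm hs hy) hz
  · intro hz
    exact Relation.ReflTransGen.trans hy hz

lemma connected_subset_compOf (hKA : K ⊆ A) (hK : connectedIn adj K) (hx : x ∈ K) :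
    K ⊆ compOf adj A x := fun y hy => pathIn_mono hKA (hK x hx y hy)

lemma pathIn_of_compOf_subset (h : compOf adj A x ⊆ B) (hy : y ∈ compOf adj A x) :
    pathIn adj B x y := by
  induction hy with
  | refl => exact Relation.ReflTransGen.refl
  | @tail u v h1 h2 ih =>
      exact Relation.ReflTransGen.tail ih
        ⟨h2.1, h h1, h (Relation.ReflTransGen.tail h1 h2)⟩

/-- the component, viewed inside a superset `B` of it. -/
lemma compOf_subset_compOf (h : compOf adj A x ⊆ B) :
    compOf adj A x ⊆ compOf adj B x := fun _ hy => pathIn_of_compOf_subset h hy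

end Generic
section Torus
variable {d L : ℕ}

lemma tadj_symm (x y : Tor d L) (h : tadj x y) : tadj y x := by
  obtain ⟨i, h1, h2⟩ := h
  exact ⟨i, h1.symm, fun j hj => (h2 j hj).symm⟩

/-- Move one coordinate up by `m` steps inside any set containing the line. -/
lemma update_path_up (x : Tor d L) (i : Fin d) (m : ℕ) {C : Set (Tor d L)}
    (hline : ∀ z : Tor d L, (∀ j, j ≠ i → z j = x j) → z ∈ C) :
    pathIn tadj C x (Function.update x i (x i + (m : ZMod L))) := by
  induction m with
  | zero => simp only [Nat.cast_zero, add_zero, Function.update_eq_self]; exact Relation.ReflTransGen.refl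
  | succ m ih =>
      refine Relation.ReflTransGen.tail ih ⟨⟨i, ?_, ?_⟩, ?_, ?_⟩
      · left
        simp [Function.update_self]
        push_cast
        ring
      · intro j hj; simp [Function.update_of_ne hj]
      · exact hline _ (fun j hj => Function.update_of_ne hj _ _)
      · exact hline _ (fun j hj => Function.update_of_ne hj _ _)

lemma move_coord [NeZero L] (x : Tor d L) (i : Fin d) (c : ZMod L) {C : Set (Tor d L)}
    (hline : ∀ z : Tor d L, (∀ j, j ≠ i → z j = x j) → z ∈ C) :
    pathIn tadj C x (Function.update x i c) := by
  have h := update_path_up (L := L) x i (c - x i).val hline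
  rwa [ZMod.natCast_val, ZMod.cast_id, add_sub_cancel] at h

end Torus
section Conn
variable {d L : ℕ} [NeZero L]

lemma diff_card_lt (x y : Tor d L) (i : Fin d) (hi : x i ≠ y i) :
    (Finset.univ.filter (fun j => Function.update x i (y i) j ≠ y j)).card
      < (Finset.univ.filter (fun j => x j ≠ y j)).card := by
  apply Finset.card_lt_card
  constructor
  · intro j hj
    simp only [Finset.mem_filter, Finset.mem_univ, true_and] at hj ⊢
    by_cases h : j = i
    · subst h; simp [Function.update_self] at hj
    · rwa [Function.update_of_ne h] at hj
  · intro hsub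
    have := hsub (Finset.mem_filter.2 ⟨Finset.mem_univ i, hi⟩)
    simp [Finset.mem_filter, Function.update_self] at this

lemma conn_aux (C : Set (Tor d L))
    (hC : ∀ z : Tor d L, z ∈ C → ∀ i : Fin d, ∀ c : ZMod L, Function.update z i c ∈ C)
    (hline : ∀ z ∈ C, ∀ i : Fin d,
      ∀ w : Tor d L, (∀ j, j ≠ i → w j = z j) → w ∈ C) :
    ∀ n (x y : Tor d L), x ∈ C → y ∈ C →
      (Finset.univ.filter (fun j => x j ≠ y j)).card ≤ n → pathIn tadj C x y := by
  intro n
  induction n with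
  | zero =>
      intro x y hx _ hcard
      have : x = y := by
        funext j
        by_contra h
        have : (Finset.univ.filter (fun j => x j ≠ y j)).Nonempty :=
          ⟨j, Finset.mem_filter.2 ⟨Finset.mem_univ j, h⟩⟩
        have := Finset.card_pos.2 this
        omega
      exact this ▸ Relation.ReflTransGen.refl
  | succ n ih =>
      intro x y hx hy hcard
      by_cases hxy : x = y
      · exact hxy ▸ Relation.ReflTransGen.refl
      · have : ∃ i, x i ≠ y i := by
          by_contra h; push_neg at h; exact hxy (funext h)
        obtain ⟨i, hi⟩ := this
        have hstep : pathIn tadj C x (Function.update x i (y i)) :=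
          move_coord x i (y i) (fun z hz => hline x hx i z hz)
        refine hstep.trans (ih _ y (hC x hx i (y i)) hy ?_)
        have := diff_card_lt x y i hi
        omega

end Conn
lemma torus_conn {d L : ℕ} [NeZero L] (x y : Tor d L) : Relation.ReflTransGen tadj x y := by
  have h := conn_aux (Set.univ : Set (Tor d L)) (fun _ _ _ _ => trivial)
    (fun _ _ _ _ _ => trivial) _ x y trivial trivial le_rfl
  exact Relation.ReflTransGen.mono (by intro u v h; exact h.1) _ _ h

section Box
variable {d L : ℕ} [NeZero L]

lemma box_move_down {a : Tor d L} {s : ℕ} (i : Fin d) :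
    ∀ k, k < s → ∀ x ∈ tbox a s, x i = a i + (k : ZMod L) →
      pathIn tadj (tbox a s) x (Function.update x i (a i)) := by
  intro k
  induction k with
  | zero =>
      intro _ x hx hxi
      have : Function.update x i (a i) = x := by
        funext j
        by_cases h : j = i
        · subst h; simp [Function.update_self, hxi]
        · simp [Function.update_of_ne h]
      rw [this]
      exact Relation.ReflTransGen.refl
  | succ k ih =>
      intro hk x hx hxi
      set z := Function.update x i (a i + (k : ZMod L)) with hz
      have hzbox : z ∈ tbox a s := by
        intro j
        by_cases h : j = i
        · subst h; exact ⟨k, by omega, by simp [hz, Function.update_self]⟩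
        · obtain ⟨k', hk', hk''⟩ := hx j
          exact ⟨k', hk', by simp [hz, Function.update_of_ne h, hk'']⟩
      have hadj : tadj x z := by
        refine ⟨i, Or.inr ?_, fun j hj => by simp [hz, Function.update_of_ne hj]⟩
        simp only [hz, Function.update_self, hxi]
        push_cast
        ring
      have hzi : z i = a i + (k : ZMod L) := by simp [hz, Function.update_self]
      have htail := ih (by omega) z hzbox hzi
      have : Function.update z i (a i) = Function.update x i (a i) := by
        simp [hz, Function.update_idem]
      rw [this] at htail
      exact Relation.ReflTransGen.head ⟨hadj, hx, hzbox⟩ htail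

lemma box_conn {a : Tor d L} {s : ℕ} : connectedIn tadj (tbox a s) := by
  have hcorner : ∀ x ∈ tbox a s, pathIn tadj (tbox a s) x
      (fun _ => 0) → True := fun _ _ _ => trivial
  -- connect everything to the corner a
  have key : ∀ n, ∀ x ∈ tbox a s,
      (Finset.univ.filter (fun j => x j ≠ a j)).card ≤ n →
      pathIn tadj (tbox a s) x a := by
    intro n
    induction n with
    | zero =>
        intro x hx hcard
        have : x = a := by
          funext j
          by_contra h
          have h2 := Finset.card_pos.2
            (⟨j, by simp [h]⟩ : (Finset.univ.filter (fun j => x j ≠ a j)).Nonempty)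
          omega
        exact this ▸ Relation.ReflTransGen.refl
    | succ n ih =>
        intro x hx hcard
        by_cases hxy : x = a
        · exact hxy ▸ Relation.ReflTransGen.refl
        · have : ∃ i, x i ≠ a i := by
            by_contra h; push_neg at h; exact hxy (funext h)
          obtain ⟨i, hi⟩ := this
          obtain ⟨k, hk, hk2⟩ := hx i
          have hstep := box_move_down i k hk x hx hk2
          have hmem : Function.update x i (a i) ∈ tbox a s := by
            intro j
            by_cases h : j = i
            · subst h
              refine ⟨0, ?_, by simp [Function.update_self]⟩
              rcases Nat.eq_zero_or_pos s with h0 | h0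
              · subst h0; omega
              · exact h0
            · obtain ⟨k', hk', hk''⟩ := hx j
              exact ⟨k', hk', by simp [Function.update_of_ne h, hk'']⟩
          refine hstep.trans (ih _ hmem ?_)
          have := diff_card_lt x a i hi
          omega
  intro x hx y hy
  exact (key _ x hx le_rfl).trans (pathIn_symm tadj_symm (key _ y hy le_rfl))

end Box
section BoxCompl
variable {d L : ℕ} [NeZero L]

lemma cast_ne_of_lt {s k : ℕ} (hs : s < L) (hk : k < s) :
    (s : ZMod L) ≠ (k : ZMod L) := by
  intro h
  have h1 : ((s : ZMod L)).val = s := ZMod.val_natCast_of_lt hs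
  have h2 : ((k : ZMod L)).val = k := ZMod.val_natCast_of_lt (by omega)
  rw [h] at h1
  omega

lemma not_mem_tbox_iff {a x : Tor d L} {s : ℕ} :
    x ∉ tbox a s ↔ ∃ i, ∀ k, k < s → x i ≠ a i + (k : ZMod L) := by
  simp only [tbox, Set.mem_setOf_eq, not_forall]
  constructor
  · rintro ⟨i, hi⟩
    refine ⟨i, fun k hk hne => hi ⟨k, hk, hne⟩⟩
  · rintro ⟨i, hi⟩
    refine ⟨i, fun ⟨k, hk, hne⟩ => hi k hk hne⟩

lemma bad_not_mem {a x : Tor d L} {s : ℕ} {i : Fin d}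
    (h : ∀ k, k < s → x i ≠ a i + (k : ZMod L)) : x ∉ tbox a s := by
  intro hx
  obtain ⟨k, hk, hk2⟩ := hx i
  exact h k hk hk2

lemma boxc_conn {a : Tor d L} {s : ℕ} (hd : 2 ≤ d) (hs : s < L) :
    connectedIn tadj (tbox a s)ᶜ := by
  classical
  set c : Tor d L := fun i => a i + (s : ZMod L) with hc
  have hcbad : ∀ i k, k < s → c i ≠ a i + (k : ZMod L) := by
    intro i k hk h
    exact cast_ne_of_lt hs hk (by simpa [hc] using h)
  -- phase 1 : connect x (bad at i0, value b at i0) to w = update c i0 b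
  have phase1 : ∀ (i0 : Fin d) (b : ZMod L), (∀ k, k < s → b ≠ a i0 + (k : ZMod L)) →
      ∀ n, ∀ x : Tor d L, x i0 = b →
      (Finset.univ.filter (fun j => x j ≠ Function.update c i0 b j)).card ≤ n →
      pathIn tadj (tbox a s)ᶜ x (Function.update c i0 b) := by
    intro i0 b hb n
    induction n with
    | zero =>
        intro x hxi hcard
        have : x = Function.update c i0 b := by
          funext j
          by_contra h
          have h2 := Finset.card_pos.2
            (⟨j, by simp [h]⟩ :
              (Finset.univ.filter (fun j => x j ≠ Function.update c i0 b j)).Nonempty)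
          omega
        exact this ▸ Relation.ReflTransGen.refl
    | succ n ih =>
        intro x hxi hcard
        set w := Function.update c i0 b with hw
        by_cases hxy : x = w
        · exact hxy ▸ Relation.ReflTransGen.refl
        · have : ∃ i, x i ≠ w i := by
            by_contra h; push_neg at h; exact hxy (funext h)
          obtain ⟨i, hi⟩ := this
          have hii0 : i ≠ i0 := by
            intro h; subst h; simp [hw, Function.update_self, hxi] at hi
          have hline : ∀ z : Tor d L, (∀ j, j ≠ i → z j = x j) → z ∈ (tbox a s)ᶜ := by
            intro z hz
            apply bad_not_mem (i := i0)
            rw [hz i0 (Ne.symm hii0), hxi]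
            exact hb
          have hstep := move_coord x i (w i) hline
          have hnext : Function.update x i (w i) i0 = b := by
            rw [Function.update_of_ne (Ne.symm hii0), hxi]
          refine hstep.trans (ih _ hnext ?_)
          have := diff_card_lt x w i hi
          omega
  -- phase 2 : from w = update c i0 b to c
  have phase2 : ∀ (i0 : Fin d) (b : ZMod L),
      pathIn tadj (tbox a s)ᶜ (Function.update c i0 b) c := by
    intro i0 b
    have : Nontrivial (Fin d) := Fin.nontrivial_iff_two_le.2 hd
    obtain ⟨j1, hj1⟩ := exists_ne i0
    have hline : ∀ z : Tor d L, (∀ j, j ≠ i0 → z j = Function.update c i0 b j) →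
        z ∈ (tbox a s)ᶜ := by
      intro z hz
      apply bad_not_mem (i := j1)
      rw [hz j1 hj1, Function.update_of_ne hj1]
      exact hcbad j1
    have h := move_coord (Function.update c i0 b) i0 (c i0) hline
    have : Function.update (Function.update c i0 b) i0 (c i0) = c := by
      simp [Function.update_idem]
    rwa [this] at h
  -- combine
  have tocenter : ∀ x ∈ (tbox a s)ᶜ, pathIn tadj (tbox a s)ᶜ x c := by
    intro x hx
    obtain ⟨i0, hi0⟩ := not_mem_tbox_iff.1 hx
    have h1 := phase1 i0 (x i0) hi0 _ x rfl le_rfl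
    exact h1.trans (phase2 i0 (x i0))
  intro x hx y hy
  exact (tocenter x hx).trans (pathIn_symm tadj_symm (tocenter y hy))

end BoxCompl
section Count
variable {d L : ℕ} [NeZero L]

instance : Fintype (Tor d L) := by unfold Tor; infer_instance

lemma tor_card : Nat.card (Tor d L) = L ^ d := by
  simp [Nat.card_eq_fintype_card, Fintype.card_fun, ZMod.card]

lemma ncard_tbox_le (hd : 1 ≤ d) (a : Tor d L) (s : ℕ) : (tbox a s).ncard ≤ s ^ d := by
  rcases Nat.eq_zero_or_pos s with h0 | h0
  · subst h0
    have : tbox a 0 = (∅ : Set (Tor d L)) := by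
      ext x
      simp only [tbox, Set.mem_setOf_eq, Set.mem_empty_iff_false, iff_false, not_forall]
      refine ⟨⟨0, by omega⟩, ?_⟩
      rintro ⟨k, hk, _⟩
      omega
    simp [this]
  · set g : (Fin d → Fin s) → Tor d L := fun k i => a i + ((k i : ℕ) : ZMod L) with hg
    have hsub : tbox a s ⊆ Set.range g := by
      intro x hx
      choose k hk hk2 using hx
      exact ⟨fun i => ⟨k i, hk i⟩, by funext i; exact (hk2 i).symm⟩
    calc (tbox a s).ncard ≤ (Set.range g).ncard :=
          Set.ncard_le_ncard hsub (Set.toFinite _)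
      _ ≤ Nat.card (Fin d → Fin s) := by
          rw [← Set.ncard_univ]
          rw [← Set.image_univ]
          exact Set.ncard_image_le (Set.toFinite _)
      _ = s ^ d := by simp [Nat.card_eq_fintype_card]

lemma ncard_compl_box (hd : 1 ≤ d) (a : Tor d L) (s : ℕ) :
    L ^ d ≤ ((tbox a s)ᶜ).ncard + s ^ d := by
  have h := Set.ncard_add_ncard_compl (tbox a s)
  rw [tor_card] at h
  have := ncard_tbox_le hd a s
  omega

lemma pow_small {s : ℕ} (hd : 1 ≤ d) (h : 2 * s < L) : 2 * s ^ d < L ^ d := by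
  calc 2 * s ^ d ≤ 2 ^ d * s ^ d := by
        have : 2 ≤ 2 ^ d := by
          calc 2 = 2 ^ 1 := rfl
            _ ≤ 2 ^ d := Nat.pow_le_pow_right (by omega) hd
        exact Nat.mul_le_mul_right _ this
    _ = (2 * s) ^ d := (Nat.mul_pow 2 s d).symm
    _ < L ^ d := Nat.pow_lt_pow_left h (by omega)

end Count
section TorusMore
variable {d L : ℕ} [NeZero L]

lemma tbox_univ (a : Tor d L) : tbox a L = Set.univ := by
  ext x
  simp only [Set.mem_univ, iff_true, tbox, Set.mem_setOf_eq]
  intro i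
  refine ⟨(x i - a i).val, ZMod.val_lt _, ?_⟩
  rw [ZMod.natCast_val, ZMod.cast_id, add_sub_cancel]

lemma tdiam_box_exists (A : Set (Tor d L)) : ∃ a, A ⊆ tbox a (tdiam A) := by
  have hne : (fun _ => (0 : ZMod L) : Tor d L) ∈ {a : Tor d L | True} := trivial
  have hmem : L ∈ {s | ∃ a : Tor d L, A ⊆ tbox a s} :=
    ⟨fun _ => 0, by rw [tbox_univ]; exact Set.subset_univ _⟩
  have := Nat.sInf_mem (⟨L, hmem⟩ : {s | ∃ a : Tor d L, A ⊆ tbox a s}.Nonempty)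
  exact this

lemma tdiam_mono {A B : Set (Tor d L)} (h : A ⊆ B) : tdiam A ≤ tdiam B := by
  obtain ⟨a, ha⟩ := tdiam_box_exists B
  exact Nat.sInf_le ⟨a, h.trans ha⟩

lemma tExt_subset_compl (Λ : Set (Tor d L)) : tExt Λ ⊆ Λᶜ := by
  unfold tExt
  split
  · intro x hx; exact hx.1
  · exact Set.empty_subset _

lemma union_tInt (Λ : Set (Tor d L)) : Λ ∪ tInt Λ = (tExt Λ)ᶜ := by
  have h := tExt_subset_compl Λ
  unfold tInt
  ext x
  by_cases hx : x ∈ Λ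
  · simp only [Set.mem_union, hx, true_or, true_iff, Set.mem_compl_iff]
    exact fun hc => (h hc) hx
  · simp only [Set.mem_union, hx, false_or, Set.mem_compl_iff]

lemma tExt_empty : tExt (∅ : Set (Tor d L)) = ∅ := by
  unfold tExt
  rw [if_neg]
  rintro ⟨-, h, -⟩
  exact Set.not_nonempty_empty h

lemma tExt_pos {Λ : Set (Tor d L)} (h1 : connectedIn tadj Λ) (h2 : Λ.Nonempty)
    (h3 : 2 * tdiam Λ < L) :
    tExt Λ = {x | x ∉ Λ ∧ L ^ d < 2 * (compOf tadj Λᶜ x).ncard} := by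
  unfold tExt
  rw [if_pos ⟨h1, h2, h3⟩]

lemma tExt_neg {Λ : Set (Tor d L)} (h : ¬ (connectedIn tadj Λ ∧ Λ.Nonempty ∧ 2 * tdiam Λ < L)) :
    tExt Λ = ∅ := by
  unfold tExt
  rw [if_neg h]

lemma big_comp_unique {A : Set (Tor d L)} {x y : Tor d L}
    (hbx : L ^ d < 2 * (compOf tadj A x).ncard)
    (hby : L ^ d < 2 * (compOf tadj A y).ncard) :
    compOf tadj A x = compOf tadj A y := by
  by_contra hne
  have hdisj : Disjoint (compOf tadj A x) (compOf tadj A y) := by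
    rw [Set.disjoint_left]
    intro z hzx hzy
    exact hne ((compOf_eq_of_mem tadj_symm hzx).trans
      (compOf_eq_of_mem tadj_symm hzy).symm)
  have hcard : (compOf tadj A x ∪ compOf tadj A y).ncard =
      (compOf tadj A x).ncard + (compOf tadj A y).ncard :=
    Set.ncard_union_eq hdisj (Set.toFinite _) (Set.toFinite _)
  have hle : (compOf tadj A x ∪ compOf tadj A y).ncard ≤ L ^ d := by
    rw [← tor_card (d := d) (L := L), ← Set.ncard_univ]
    exact Set.ncard_le_ncard (Set.subset_univ _) (Set.toFinite _)
  omega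

lemma exists_touch {Λ : Set (Tor d L)} (hne : Λ.Nonempty) {e : Tor d L} (he : e ∉ Λ) :
    ∃ v w, v ∈ compOf tadj Λᶜ e ∧ w ∈ Λ ∧ tadj v w := by
  obtain ⟨w0, hw0⟩ := hne
  have hpath : Relation.ReflTransGen tadj e w0 := torus_conn e w0
  have key : ∀ u, Relation.ReflTransGen tadj u w0 → u ∉ Λ →
      ∃ v w, pathIn tadj Λᶜ u v ∧ w ∈ Λ ∧ tadj v w := by
    intro u hu
    induction hu using Relation.ReflTransGen.head_induction_on with
    | refl => intro hu2; exact absurd hw0 hu2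
    | @head b c hbc hcw ih =>
        intro hb
        by_cases hc : c ∈ Λ
        · exact ⟨b, c, Relation.ReflTransGen.refl, hc, hbc⟩
        · obtain ⟨v, w, hp, hw, hvw⟩ := ih hc
          exact ⟨v, w, Relation.ReflTransGen.head ⟨hbc, hb, hc⟩ hp, hw, hvw⟩
  obtain ⟨v, w, hp, hw, hvw⟩ := key e hpath he
  exact ⟨v, w, hp, hw, hvw⟩

end TorusMore
section GR
variable {d L R : ℕ} {S : Type*} [NeZero L]

lemma gadjT_symm (σ : Tor d L → S) : ∀ x y, gadjT R σ x y → gadjT R σ y x := by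
  rintro x y ⟨hne, a, h1, h2, h3⟩
  exact ⟨hne.symm, a, h2, h1, h3⟩

lemma box_subset_BRT {σ : Tor d L → S} {a : Tor d L}
    (h : ¬ constOn σ (tbox a (2 * R + 1))) : tbox a (2 * R + 1) ⊆ BRT R σ :=
  fun x hx => ⟨a, hx, h⟩

lemma box_subset_gcomp {σ : Tor d L → S} {x a : Tor d L}
    (hx : x ∈ tbox a (2 * R + 1)) (hbad : ¬ constOn σ (tbox a (2 * R + 1))) :
    tbox a (2 * R + 1) ⊆ gcompT R σ x := by
  intro y hy
  by_cases hxy : y = x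
  · subst hxy; exact mem_compOf_self
  · exact Relation.ReflTransGen.single
      ⟨⟨Ne.symm hxy, a, hx, hy, hbad⟩, box_subset_BRT hbad hx, box_subset_BRT hbad hy⟩

lemma mem_gcomp_self (σ : Tor d L → S) (x : Tor d L) : x ∈ gcompT R σ x :=
  mem_compOf_self

lemma gcomp_eq {σ : Tor d L → S} {x y : Tor d L} (hy : y ∈ gcompT R σ x) :
    gcompT R σ x = gcompT R σ y :=
  compOf_eq_of_mem (gadjT_symm σ) hy

lemma gcomp_subset_BRT {σ : Tor d L → S} {x : Tor d L} (hx : x ∈ BRT R σ) :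
    gcompT R σ x ⊆ BRT R σ := compOf_subset hx

lemma gcomp_conn {σ : Tor d L → S} {x : Tor d L} :
    connectedIn tadj (gcompT R σ x) := by
  have key : ∀ y ∈ gcompT R σ x, pathIn tadj (gcompT R σ x) x y := by
    intro y hy
    induction hy with
    | refl => exact Relation.ReflTransGen.refl
    | @tail u v h1 h2 ih =>
        obtain ⟨hneq, a, hu, hv, hbad⟩ := h2.1
        have hboxu : tbox a (2 * R + 1) ⊆ gcompT R σ u := box_subset_gcomp hu hbad
        have hcomp_eq : gcompT R σ x = gcompT R σ u := gcomp_eq h1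
        have hbox : tbox a (2 * R + 1) ⊆ gcompT R σ x := hcomp_eq ▸ hboxu
        have hpath : pathIn tadj (tbox a (2 * R + 1)) u v := box_conn u hu v hv
        exact ih.trans (pathIn_mono hbox hpath)
  intro y hy z hz
  exact (pathIn_symm tadj_symm (key y hy)).trans (key z hz)

lemma gcomp_eq_or_disjoint {σ : Tor d L → S} {x y : Tor d L} :
    gcompT R σ x = gcompT R σ y ∨ gcompT R σ x ∩ gcompT R σ y = ∅ := by
  by_cases h : gcompT R σ x ∩ gcompT R σ y = ∅
  · exact Or.inr h
  · left
    obtain ⟨z, hzx, hzy⟩ := Set.nonempty_iff_ne_empty.2 h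
    exact (gcomp_eq hzx).trans (gcomp_eq hzy).symm

end GR
section Geom
variable {d L : ℕ} [NeZero L]

lemma mem_tInt_iff {Λ : Set (Tor d L)} {x : Tor d L} :
    x ∈ tInt Λ ↔ x ∉ Λ ∧ x ∉ tExt Λ := by
  unfold tInt
  simp [not_or]

lemma tInt_disj_tExt {Λ : Set (Tor d L)} {x : Tor d L} (h : x ∈ tInt Λ) : x ∉ tExt Λ :=
  (mem_tInt_iff.1 h).2

/-- the complement component of any point outside the bounding box is big -/
lemma big_comp_of_outside (hd : 2 ≤ d) {Λ : Set (Tor d L)}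
    (hsm : 2 * tdiam Λ < L) {a : Tor d L} (ha : Λ ⊆ tbox a (tdiam Λ))
    {e : Tor d L} (he : e ∉ tbox a (tdiam Λ)) :
    L ^ d < 2 * (compOf tadj Λᶜ e).ncard := by
  set s := tdiam Λ with hs
  have hsL : s < L := by omega
  have hd1 : 1 ≤ d := by omega
  have hsub : (tbox a s)ᶜ ⊆ compOf tadj Λᶜ e :=
    connected_subset_compOf (Set.compl_subset_compl.2 ha) (boxc_conn hd hsL) he
  have h1 := ncard_compl_box hd1 a s
  have h2 : ((tbox a s)ᶜ).ncard ≤ (compOf tadj Λᶜ e).ncard :=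
    Set.ncard_le_ncard hsub (Set.toFinite _)
  have h3 := pow_small (s := s) hd1 hsm
  omega

lemma outside_mem_tExt (hd : 2 ≤ d) {Λ : Set (Tor d L)} (hconn : connectedIn tadj Λ)
    (hne : Λ.Nonempty) (hsm : 2 * tdiam Λ < L) {a : Tor d L} (ha : Λ ⊆ tbox a (tdiam Λ))
    {e : Tor d L} (he : e ∉ tbox a (tdiam Λ)) : e ∈ tExt Λ := by
  rw [tExt_pos hconn hne hsm]
  exact ⟨fun h => he (ha h), big_comp_of_outside hd hsm ha he⟩

lemma mem_tExt_of_big {Λ : Set (Tor d L)} (hconn : connectedIn tadj Λ) (hne : Λ.Nonempty)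
    (hsm : 2 * tdiam Λ < L) {x : Tor d L} (hx : x ∉ Λ)
    (hbig : L ^ d < 2 * (compOf tadj Λᶜ x).ncard) : x ∈ tExt Λ := by
  rw [tExt_pos hconn hne hsm]
  exact ⟨hx, hbig⟩

/-- dichotomy: a connected set avoiding `Λ` is in the exterior or interior. -/
lemma conn_subset_ext_or_int (hd : 2 ≤ d) {Λ K : Set (Tor d L)}
    (hconn : connectedIn tadj Λ) (hne : Λ.Nonempty) (hsm : 2 * tdiam Λ < L)
    (hK : connectedIn tadj K) (hKne : K.Nonempty) (hKΛ : K ⊆ Λᶜ) :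
    K ⊆ tExt Λ ∨ K ⊆ tInt Λ := by
  obtain ⟨x0, hx0⟩ := hKne
  have hKc : K ⊆ compOf tadj Λᶜ x0 := connected_subset_compOf hKΛ hK hx0
  by_cases hbig : L ^ d < 2 * (compOf tadj Λᶜ x0).ncard
  · left
    intro y hy
    rw [tExt_pos hconn hne hsm]
    refine ⟨hKΛ hy, ?_⟩
    rwa [← compOf_eq_of_mem tadj_symm (hKc hy)]
  · right
    intro y hy
    rw [mem_tInt_iff]
    refine ⟨hKΛ hy, ?_⟩
    rw [tExt_pos hconn hne hsm]
    rintro ⟨-, hb⟩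
    rw [← compOf_eq_of_mem tadj_symm (hKc hy)] at hb
    exact hbig hb

/-- `Λ ∪ tInt Λ = (tExt Λ)ᶜ` is `tadj`-connected. -/
lemma vset_conn {Λ : Set (Tor d L)} (hconn : connectedIn tadj Λ)
    (hne : Λ.Nonempty) (hsm : 2 * tdiam Λ < L) :
    connectedIn tadj ((tExt Λ)ᶜ) := by
  have hΛsub : Λ ⊆ (tExt Λ)ᶜ := fun x hx hc => (tExt_subset_compl Λ hc) hx
  obtain ⟨w0, hw0⟩ := hne
  have key : ∀ u ∈ (tExt Λ)ᶜ, pathIn tadj ((tExt Λ)ᶜ) u w0 := by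
    intro u hu
    by_cases huΛ : u ∈ Λ
    · exact pathIn_mono hΛsub (hconn u huΛ w0 hw0)
    · -- u is in the interior : its complement-component avoids the exterior
      have hcompsub : compOf tadj Λᶜ u ⊆ (tExt Λ)ᶜ := by
        intro y hy
        intro hyext
        rw [tExt_pos hconn ⟨w0, hw0⟩ hsm] at hyext
        obtain ⟨hy1, hy2⟩ := hyext
        rw [← compOf_eq_of_mem tadj_symm hy] at hy2
        have : u ∈ tExt Λ := by
          rw [tExt_pos hconn ⟨w0, hw0⟩ hsm]
          exact ⟨huΛ, hy2⟩
        exact hu this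
      obtain ⟨v, w, hv, hw, hvw⟩ := exists_touch ⟨w0, hw0⟩ huΛ
      have h1 : pathIn tadj ((tExt Λ)ᶜ) u v := pathIn_of_compOf_subset hcompsub hv
      have h2 : pathIn tadj ((tExt Λ)ᶜ) v w :=
        Relation.ReflTransGen.single ⟨hvw, hcompsub hv, hΛsub hw⟩
      exact (h1.trans h2).trans (pathIn_mono hΛsub (hconn w hw w0 hw0))
  intro x hx y hy
  exact (key x hx).trans (pathIn_symm tadj_symm (key y hy))

end Geom
section Geom2
variable {d L : ℕ} [NeZero L]

/-- a site outside two small bounding boxes exists. -/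
lemma exists_outside_two_boxes (hd : 2 ≤ d) {s s' : ℕ} (hs : 2 * s < L) (hs' : 2 * s' < L)
    (a a' : Tor d L) : ∃ e : Tor d L, e ∉ tbox a s ∧ e ∉ tbox a' s' := by
  have hd1 : 1 ≤ d := by omega
  by_contra h
  push_neg at h
  have hcover : (Set.univ : Set (Tor d L)) ⊆ tbox a s ∪ tbox a' s' := by
    intro e _
    by_cases he : e ∈ tbox a s
    · exact Or.inl he
    · exact Or.inr (h e he)
  have h1 : (Set.univ : Set (Tor d L)).ncard ≤ (tbox a s ∪ tbox a' s').ncard :=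
    Set.ncard_le_ncard hcover (Set.toFinite _)
  have h2 : (tbox a s ∪ tbox a' s').ncard ≤ (tbox a s).ncard + (tbox a' s').ncard :=
    Set.ncard_union_le _ _
  have h3 := ncard_tbox_le hd1 a s
  have h4 := ncard_tbox_le hd1 a' s'
  have h5 : (Set.univ : Set (Tor d L)).ncard = L ^ d := by
    rw [Set.ncard_univ, tor_card]
  have h6 := pow_small hd1 hs
  have h7 := pow_small hd1 hs'
  omega

/-- If `Λ ⊆ tInt Λ'`, then `tExt Λ' ⊆ tExt Λ` (both small). -/
lemma ext_antitone (hd : 2 ≤ d) {Λ Λ' : Set (Tor d L)}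
    (hconn : connectedIn tadj Λ) (hne : Λ.Nonempty) (hsm : 2 * tdiam Λ < L)
    (hconn' : connectedIn tadj Λ') (hne' : Λ'.Nonempty) (hsm' : 2 * tdiam Λ' < L)
    (hint : Λ ⊆ tInt Λ') : tExt Λ' ⊆ tExt Λ := by
  obtain ⟨a, ha⟩ := tdiam_box_exists Λ
  obtain ⟨a', ha'⟩ := tdiam_box_exists Λ'
  obtain ⟨e, he, he'⟩ := exists_outside_two_boxes hd hsm hsm' a a'
  have heΛ : e ∈ tExt Λ := outside_mem_tExt hd hconn hne hsm ha he
  have heΛ' : e ∈ tExt Λ' := outside_mem_tExt hd hconn' hne' hsm' ha' he'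
  have hebig' : L ^ d < 2 * (compOf tadj Λ'ᶜ e).ncard := by
    rw [tExt_pos hconn' hne' hsm'] at heΛ'
    exact heΛ'.2
  have hebig : L ^ d < 2 * (compOf tadj Λᶜ e).ncard := by
    rw [tExt_pos hconn hne hsm] at heΛ
    exact heΛ.2
  intro z hz
  rw [tExt_pos hconn' hne' hsm'] at hz
  obtain ⟨hz1, hz2⟩ := hz
  -- z and e are in the same (unique big) component of Λ'ᶜ
  have hzcomp : compOf tadj Λ'ᶜ z = compOf tadj Λ'ᶜ e := big_comp_unique hz2 hebig'
  -- this component avoids Λ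
  have hsub : compOf tadj Λ'ᶜ e ⊆ Λᶜ := by
    intro w hw
    have hwext : w ∈ tExt Λ' := by
      rw [tExt_pos hconn' hne' hsm']
      have heΛ'c : e ∈ Λ'ᶜ := tExt_subset_compl Λ' heΛ'
      refine ⟨compOf_subset heΛ'c hw, ?_⟩
      rwa [← compOf_eq_of_mem tadj_symm hw]
    intro hwΛ
    exact tInt_disj_tExt (hint hwΛ) hwext
  -- hence z lies in the big component of Λᶜ containing e
  have hz_in : z ∈ compOf tadj Λᶜ e := by
    have : z ∈ compOf tadj Λ'ᶜ e := by rw [← hzcomp]; exact mem_compOf_self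
    exact pathIn_of_compOf_subset hsub this
  rw [tExt_pos hconn hne hsm]
  refine ⟨fun hc => (hsub (by rw [← hzcomp]; exact mem_compOf_self)) hc, ?_⟩
  rwa [← compOf_eq_of_mem tadj_symm hz_in]

/-- If `Λ ⊆ tExt Λ'` and `Λ' ⊆ tExt Λ`, then `(tExt Λ)ᶜ ⊆ tExt Λ'` (both small). -/
lemma vset_subset_ext (hd : 2 ≤ d) {Λ Λ' : Set (Tor d L)}
    (hconn : connectedIn tadj Λ) (hne : Λ.Nonempty) (hsm : 2 * tdiam Λ < L)
    (hconn' : connectedIn tadj Λ') (hne' : Λ'.Nonempty) (hsm' : 2 * tdiam Λ' < L)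
    (h1 : Λ ⊆ tExt Λ') (h2 : Λ' ⊆ tExt Λ) : (tExt Λ)ᶜ ⊆ tExt Λ' := by
  obtain ⟨w0, hw0⟩ := id hne
  have hKconn := vset_conn hconn hne hsm
  have hKΛ' : (tExt Λ)ᶜ ⊆ Λ'ᶜ := fun x hx hc => hx (h2 hc)
  have hw0K : w0 ∈ (tExt Λ)ᶜ := fun hc => (tExt_subset_compl Λ hc) hw0
  have hKc : (tExt Λ)ᶜ ⊆ compOf tadj Λ'ᶜ w0 :=
    connected_subset_compOf hKΛ' hKconn hw0K
  have hw0big : L ^ d < 2 * (compOf tadj Λ'ᶜ w0).ncard := by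
    have := h1 hw0
    rw [tExt_pos hconn' hne' hsm'] at this
    exact this.2
  intro z hz
  rw [tExt_pos hconn' hne' hsm']
  refine ⟨fun hc => hKΛ' hz hc, ?_⟩
  rw [← compOf_eq_of_mem tadj_symm (hKc hz)]
  exact hw0big

/-- mutual interiority is impossible (both small, disjoint). -/
lemma no_mutual_int (hd : 2 ≤ d) {Λ Λ' : Set (Tor d L)}
    (hconn : connectedIn tadj Λ) (hne : Λ.Nonempty) (hsm : 2 * tdiam Λ < L)
    (hconn' : connectedIn tadj Λ') (hne' : Λ'.Nonempty) (hsm' : 2 * tdiam Λ' < L)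
    (hdisj : Λ ∩ Λ' = ∅) :
    ¬ (Λ ⊆ tInt Λ' ∧ Λ' ⊆ tInt Λ) := by
  rintro ⟨hII, hII'⟩
  obtain ⟨a, ha⟩ := tdiam_box_exists Λ
  obtain ⟨a', ha'⟩ := tdiam_box_exists Λ'
  obtain ⟨e, he, he'⟩ := exists_outside_two_boxes hd hsm hsm' a a'
  have heΛ : e ∈ tExt Λ := outside_mem_tExt hd hconn hne hsm ha he
  have hebig : L ^ d < 2 * (compOf tadj Λᶜ e).ncard := by
    rw [tExt_pos hconn hne hsm] at heΛ
    exact heΛ.2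
  have heΛc : e ∈ Λᶜ := tExt_subset_compl Λ heΛ
  -- the big component D of Λᶜ is contained in tExt Λ, hence avoids Λ'
  have hD_ext : compOf tadj Λᶜ e ⊆ tExt Λ := by
    intro w hw
    rw [tExt_pos hconn hne hsm]
    refine ⟨compOf_subset heΛc hw, ?_⟩
    rwa [← compOf_eq_of_mem tadj_symm hw]
  have hD_Λ' : compOf tadj Λᶜ e ⊆ Λ'ᶜ := by
    intro w hw hwΛ'
    exact tInt_disj_tExt (hII' hwΛ') (hD_ext hw)
  -- a touching point of D on Λ
  obtain ⟨v, w, hv, hw, hvw⟩ := exists_touch hne heΛc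
  -- w ∈ Λ, so its Λ'ᶜ-component is small; but it contains D, which is big
  have hwΛ'c : w ∈ Λ'ᶜ := fun hc => (Set.eq_empty_iff_forall_notMem.1 hdisj w) ⟨hw, hc⟩
  have hvC : v ∈ compOf tadj Λ'ᶜ w :=
    Relation.ReflTransGen.single ⟨tadj_symm v w hvw, hwΛ'c, hD_Λ' hv⟩
  have hDv : compOf tadj Λᶜ e = compOf tadj Λᶜ v := compOf_eq_of_mem tadj_symm hv
  have hD_subC : compOf tadj Λᶜ e ⊆ compOf tadj Λ'ᶜ w := by
    intro y hy
    have hyv : y ∈ compOf tadj Λᶜ v := hDv ▸ hy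
    have : pathIn tadj Λ'ᶜ v y :=
      pathIn_of_compOf_subset (hDv ▸ hD_Λ') hyv
    exact Relation.ReflTransGen.trans hvC this
  have hCbig : L ^ d < 2 * (compOf tadj Λ'ᶜ w).ncard := by
    have := Set.ncard_le_ncard hD_subC (Set.toFinite _)
    omega
  have hwint : w ∈ tInt Λ' := hII hw
  have : w ∈ tExt Λ' := by
    rw [tExt_pos hconn' hne' hsm']
    exact ⟨hwΛ'c, hCbig⟩
  exact tInt_disj_tExt hwint this

end Geom2
section Main
variable {d L R : ℕ} {S : Type*} [NeZero L]

lemma tdiam_tbox_le (a : Tor d L) (s : ℕ) : tdiam (tbox a s) ≤ s :=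
  Nat.sInf_le ⟨a, subset_rfl⟩

lemma gcomp_subset_bigUnion {σ : Tor d L → S} {x : Tor d L} (hx : x ∈ bigUnion R σ) :
    gcompT R σ x ⊆ bigUnion R σ := by
  intro y hy
  refine ⟨gcomp_subset_BRT hx.1 hy, ?_⟩
  rw [← gcomp_eq hy]
  exact hx.2

lemma bigUnion_tExt_empty {σ : Tor d L → S} (hne : (bigUnion R σ).Nonempty) :
    tExt (bigUnion R σ) = ∅ := by
  obtain ⟨x, hx⟩ := hne
  apply tExt_neg
  rintro ⟨-, -, hsm⟩
  have h1 : tdiam (gcompT R σ x) ≤ tdiam (bigUnion R σ) :=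
    tdiam_mono (gcomp_subset_bigUnion hx)
  have := hx.2
  omega

lemma bigUnion_subset_ext (hd : 2 ≤ d) {σ : Tor d L → S} {x0 : Tor d L}
    (hx0 : x0 ∈ BRT R σ) (hsm : 2 * tdiam (gcompT R σ x0) < L) :
    bigUnion R σ ⊆ tExt (gcompT R σ x0) := by
  set Λ := gcompT R σ x0 with hΛ
  have hconn : connectedIn tadj Λ := gcomp_conn
  have hne : Λ.Nonempty := ⟨x0, mem_compOf_self⟩
  obtain ⟨a, ha⟩ := tdiam_box_exists Λ
  rintro x ⟨hxB, hxbig⟩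
  have hCne : gcompT R σ x ≠ Λ := by
    intro h
    rw [h] at hxbig
    omega
  have hCdisj : gcompT R σ x ∩ Λ = ∅ := by
    rcases gcomp_eq_or_disjoint (σ := σ) (x := x) (y := x0) with h | h
    · exact absurd h hCne
    · exact h
  have hCsub : gcompT R σ x ⊆ Λᶜ := by
    intro y hy hc
    exact (Set.eq_empty_iff_forall_notMem.1 hCdisj y) ⟨hy, hc⟩
  have hxΛ : x ∉ Λ := fun hc => hCsub mem_compOf_self hc
  -- the big component escapes the bounding box of Λ
  have hesc : ∃ y ∈ gcompT R σ x, y ∉ tbox a (tdiam Λ) := by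
    by_contra h
    push_neg at h
    have hsub : gcompT R σ x ⊆ tbox a (tdiam Λ) := h
    have h1 : tdiam (gcompT R σ x) ≤ tdiam (tbox a (tdiam Λ)) := tdiam_mono hsub
    have h2 := tdiam_tbox_le a (tdiam Λ)
    omega
  obtain ⟨y, hyC, hybox⟩ := hesc
  have hyin : y ∈ compOf tadj Λᶜ x :=
    connected_subset_compOf hCsub gcomp_conn mem_compOf_self hyC
  have hbig : L ^ d < 2 * (compOf tadj Λᶜ y).ncard :=
    big_comp_of_outside hd hsm ha hybox
  rw [← compOf_eq_of_mem tadj_symm hyin] at hbig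
  exact mem_tExt_of_big hconn hne hsm hxΛ hbig

lemma compl_trick {Λ Λ' : Set (Tor d L)} (h : Λ' ∪ tExt Λ' ⊆ tExt Λ) :
    Λ ∪ tInt Λ ⊆ tInt Λ' := by
  rw [union_tInt]
  exact Set.compl_subset_compl.2 h

lemma excl_QQ' {Λ Λ' : Set (Tor d L)} (h : Λ.Nonempty ∨ Λ'.Nonempty)
    (h1 : Λ' ∪ tExt Λ' ⊆ tExt Λ) (h2 : Λ ∪ tExt Λ ⊆ tExt Λ') : False := by
  rcases h with ⟨x, hx⟩ | ⟨x, hx⟩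
  · exact tExt_subset_compl Λ (h1 (Or.inr (h2 (Or.inl hx)))) (by exact hx)
  · exact tExt_subset_compl Λ' (h2 (Or.inr (h1 (Or.inl hx)))) (by exact hx)

lemma excl_int_ext {Λ Λ' : Set (Tor d L)}
    (h1 : Λ ∪ tInt Λ ⊆ tInt Λ') (h3 : Λ ∪ tInt Λ ⊆ tExt Λ') : False := by
  have hV : Λ ∪ tInt Λ = (tExt Λ)ᶜ := union_tInt Λ
  by_cases h : ((tExt Λ)ᶜ).Nonempty
  · obtain ⟨x, hx⟩ := h
    have hx1 : x ∈ tInt Λ' := h1 (hV ▸ hx)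
    have hx2 : x ∈ tExt Λ' := h3 (hV ▸ hx)
    exact tInt_disj_tExt hx1 hx2
  · rw [Set.not_nonempty_iff_eq_empty, Set.compl_empty_iff] at h
    have hΛe : Λ = ∅ := by
      ext x
      simp only [Set.mem_empty_iff_false, iff_false]
      intro hx
      exact tExt_subset_compl Λ (h ▸ Set.mem_univ x) hx
    rw [hΛe, tExt_empty] at h
    have : (Classical.arbitrary (Tor d L)) ∈ (∅ : Set (Tor d L)) :=
      h ▸ Set.mem_univ _
    exact this

end Main
/-- **Lemma 3.5** (trichotomy for components of the `R`-boundary).  For any two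
distinct sets `Λ, Λ'` that are each either the vertex set of a small component of
`G_R(σ)` or the union of the vertex sets of all large components, exactly one of
the three nesting alternatives holds. -/
theorem component_trichotomy (hd : 2 ≤ d) (hR : 1 ≤ R) (hL : 2 * R + 1 < L)
    (σ : Tor d L → S) (Λ Λ' : Set (Tor d L))
    (hΛ : IsSmallCompSet R σ Λ ∨ Λ = bigUnion R σ)
    (hΛ' : IsSmallCompSet R σ Λ' ∨ Λ' = bigUnion R σ)
    (hne : Λ ≠ Λ') :
    (((Λ ∪ tInt Λ ⊆ tInt Λ') ∧ (Λ' ∪ tExt Λ' ⊆ tExt Λ)) ∧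
      ¬((Λ' ∪ tInt Λ' ⊆ tInt Λ) ∧ (Λ ∪ tExt Λ ⊆ tExt Λ')) ∧
      ¬((Λ ∪ tInt Λ ⊆ tExt Λ') ∧ (Λ' ∪ tInt Λ' ⊆ tExt Λ))) ∨
    (¬((Λ ∪ tInt Λ ⊆ tInt Λ') ∧ (Λ' ∪ tExt Λ' ⊆ tExt Λ)) ∧
      ((Λ' ∪ tInt Λ' ⊆ tInt Λ) ∧ (Λ ∪ tExt Λ ⊆ tExt Λ')) ∧
      ¬((Λ ∪ tInt Λ ⊆ tExt Λ') ∧ (Λ' ∪ tInt Λ' ⊆ tExt Λ))) ∨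
    (¬((Λ ∪ tInt Λ ⊆ tInt Λ') ∧ (Λ' ∪ tExt Λ' ⊆ tExt Λ)) ∧
      ¬((Λ' ∪ tInt Λ' ⊆ tInt Λ) ∧ (Λ ∪ tExt Λ ⊆ tExt Λ')) ∧
      ((Λ ∪ tInt Λ ⊆ tExt Λ') ∧ (Λ' ∪ tInt Λ' ⊆ tExt Λ))) := by
  haveI : NeZero L := ⟨by omega⟩
  -- the three alternatives
  set Q1 : Prop := (Λ ∪ tInt Λ ⊆ tInt Λ') ∧ (Λ' ∪ tExt Λ' ⊆ tExt Λ) with hQ1def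
  set Q2 : Prop := (Λ' ∪ tInt Λ' ⊆ tInt Λ) ∧ (Λ ∪ tExt Λ ⊆ tExt Λ') with hQ2def
  set Q3 : Prop := (Λ ∪ tInt Λ ⊆ tExt Λ') ∧ (Λ' ∪ tInt Λ' ⊆ tExt Λ) with hQ3def
  -- at least one of the two sets is nonempty
  have hone : Λ.Nonempty ∨ Λ'.Nonempty := by
    rcases hΛ with ⟨⟨x0, hx0B, hΛeq⟩, -⟩ | hbig
    · exact Or.inl ⟨x0, hΛeq ▸ mem_compOf_self⟩
    · rcases hΛ' with ⟨⟨x0, hx0B, hΛeq⟩, -⟩ | hbig'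
      · exact Or.inr ⟨x0, hΛeq ▸ mem_compOf_self⟩
      · exact absurd (hbig.trans hbig'.symm) hne
  -- main disjunction
  have hQ : Q1 ∨ Q2 ∨ Q3 := by
    rcases hΛ with ⟨⟨x0, hx0B, hΛeq⟩, hsmΛ⟩ | hbig
    · rcases hΛ' with ⟨⟨x0', hx0B', hΛeq'⟩, hsmΛ'⟩ | hbig'
      · -- both small components
        have hconn : connectedIn tadj Λ := hΛeq ▸ gcomp_conn
        have hneΛ : Λ.Nonempty := ⟨x0, hΛeq ▸ mem_compOf_self⟩
        have hconn' : connectedIn tadj Λ' := hΛeq' ▸ gcomp_conn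
        have hneΛ' : Λ'.Nonempty := ⟨x0', hΛeq' ▸ mem_compOf_self⟩
        have hdisj : Λ ∩ Λ' = ∅ := by
          rcases gcomp_eq_or_disjoint (σ := σ) (x := x0) (y := x0') with h | h
          · exact absurd (hΛeq.trans (h.trans hΛeq'.symm)) hne
          · rw [hΛeq, hΛeq']; exact h
        have hsubc : Λ' ⊆ Λᶜ := fun y hy hc =>
          (Set.eq_empty_iff_forall_notMem.1 hdisj y) ⟨hc, hy⟩
        have hsubc' : Λ ⊆ Λ'ᶜ := fun y hy hc =>
          (Set.eq_empty_iff_forall_notMem.1 hdisj y) ⟨hy, hc⟩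
        have hdich1 : Λ' ⊆ tExt Λ ∨ Λ' ⊆ tInt Λ :=
          conn_subset_ext_or_int hd hconn hneΛ hsmΛ hconn' hneΛ' hsubc
        have hdich2 : Λ ⊆ tExt Λ' ∨ Λ ⊆ tInt Λ' :=
          conn_subset_ext_or_int hd hconn' hneΛ' hsmΛ' hconn hneΛ hsubc'
        rcases hdich1 with hext1 | hint1
        · rcases hdich2 with hext2 | hint2
          · -- both exterior : Q3
            refine Or.inr (Or.inr ⟨?_, ?_⟩)
            · rw [union_tInt]
              exact vset_subset_ext hd hconn hneΛ hsmΛ hconn' hneΛ' hsmΛ' hext2 hext1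
            · rw [union_tInt]
              exact vset_subset_ext hd hconn' hneΛ' hsmΛ' hconn hneΛ hsmΛ hext1 hext2
          · -- Λ ⊆ tInt Λ', Λ' ⊆ tExt Λ : Q1
            refine Or.inl ⟨?_, ?_⟩
            · apply compl_trick
              exact Set.union_subset hext1
                (ext_antitone hd hconn hneΛ hsmΛ hconn' hneΛ' hsmΛ' hint2)
            · exact Set.union_subset hext1
                (ext_antitone hd hconn hneΛ hsmΛ hconn' hneΛ' hsmΛ' hint2)
        · rcases hdich2 with hext2 | hint2
          · -- Λ' ⊆ tInt Λ, Λ ⊆ tExt Λ' : Q2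
            refine Or.inr (Or.inl ⟨?_, ?_⟩)
            · apply compl_trick
              exact Set.union_subset hext2
                (ext_antitone hd hconn' hneΛ' hsmΛ' hconn hneΛ hsmΛ hint1)
            · exact Set.union_subset hext2
                (ext_antitone hd hconn' hneΛ' hsmΛ' hconn hneΛ hsmΛ hint1)
          · exact absurd ⟨hint2, hint1⟩
              (no_mutual_int hd hconn hneΛ hsmΛ hconn' hneΛ' hsmΛ' hdisj)
      · -- Λ small, Λ' = bigUnion : Q1
        have hpart2 : Λ' ∪ tExt Λ' ⊆ tExt Λ := by
          by_cases hb : Λ'.Nonempty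
          · have hext' : tExt Λ' = ∅ := by
              rw [hbig']
              exact bigUnion_tExt_empty (hbig' ▸ hb)
            rw [hext']
            have h1 : Λ' ⊆ tExt Λ := by
              rw [hbig', hΛeq]
              refine bigUnion_subset_ext hd hx0B ?_
              rw [← hΛeq]
              exact hsmΛ
            exact Set.union_subset h1 (Set.empty_subset _)
          · rw [Set.not_nonempty_iff_eq_empty] at hb
            rw [hb, tExt_empty]
            simp
        exact Or.inl ⟨compl_trick hpart2, hpart2⟩
    · rcases hΛ' with ⟨⟨x0', hx0B', hΛeq'⟩, hsmΛ'⟩ | hbig'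
      · -- Λ = bigUnion, Λ' small : Q2
        have hpart2 : Λ ∪ tExt Λ ⊆ tExt Λ' := by
          by_cases hb : Λ.Nonempty
          · have hext : tExt Λ = ∅ := by
              rw [hbig]
              exact bigUnion_tExt_empty (hbig ▸ hb)
            rw [hext]
            have h1 : Λ ⊆ tExt Λ' := by
              rw [hbig, hΛeq']
              refine bigUnion_subset_ext hd hx0B' ?_
              rw [← hΛeq']
              exact hsmΛ'
            exact Set.union_subset h1 (Set.empty_subset _)
          · rw [Set.not_nonempty_iff_eq_empty] at hb
            rw [hb, tExt_empty]
            simp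
        exact Or.inr (Or.inl ⟨compl_trick hpart2, hpart2⟩)
      · exact absurd (hbig.trans hbig'.symm) hne
  -- exclusions
  have e12 : ¬ (Q1 ∧ Q2) := fun ⟨q1, q2⟩ => excl_QQ' hone q1.2 q2.2
  have e13 : ¬ (Q1 ∧ Q3) := fun ⟨q1, q3⟩ => excl_int_ext q1.1 q3.1
  have e23 : ¬ (Q2 ∧ Q3) := fun ⟨q2, q3⟩ => excl_int_ext q2.1 q3.2
  rcases hQ with q | q | q
  · exact Or.inl ⟨q, fun q2 => e12 ⟨q, q2⟩, fun q3 => e13 ⟨q, q3⟩⟩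
  · exact Or.inr (Or.inl ⟨fun q1 => e12 ⟨q1, q⟩, q, fun q3 => e23 ⟨q, q3⟩⟩)
  · exact Or.inr (Or.inr ⟨fun q1 => e13 ⟨q1, q⟩, fun q2 => e23 ⟨q2, q⟩, q⟩)
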